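/- arXiv:1808.10227 — 2 statements merged into one kernel-verified Lean document; each statement's English description precedes it below -/
import Mathlib

section
/- There exists a coloring of the edges of the Rado graph with two colors such that no induced subgraph of the Rado graph which is itself isomorphic to the Rado graph has all of its edges of the same color. Precisely: let R be a simple graph on vertex set ℕ satisfying the extension property. Then there is a function c from the unordered edges of R to {0,1} such that for every set S ⊆ ℕ for which the induced subgraph of R on S again satisfies the extension property (with respect to vertices in S), there exist edges e₁, e₂ of R with both endpoints in S such that c(e₁) = 0 and c(e₂) = 1. -/
/-- A simple graph on `ℕ` satisfies the extension property if for all disjoint finite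
sets `A, B ⊆ ℕ` there is a vertex `v ∉ A ∪ B` adjacent to every vertex of `A` and to
no vertex of `B`. -/
def ExtensionProperty (R : SimpleGraph ℕ) : Prop :=
  ∀ A B : Finset ℕ, Disjoint A B →
    ∃ v, v ∉ A ∧ v ∉ B ∧ (∀ a ∈ A, R.Adj v a) ∧ ∀ b ∈ B, ¬ R.Adj v b

/-- The induced subgraph of `R` on `S ⊆ ℕ` satisfies the extension property (with
respect to vertices in `S`). -/
def ExtensionPropertyOn (R : SimpleGraph ℕ) (S : Set ℕ) : Prop :=
  ∀ A B : Finset ℕ, ↑A ⊆ S → ↑B ⊆ S → Disjoint A B →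
    ∃ v ∈ S, v ∉ A ∧ v ∉ B ∧ (∀ a ∈ A, R.Adj v a) ∧ ∀ b ∈ B, ¬ R.Adj v b

/-- The "type" of a pair: true iff at the first place `u` below `min a b` where the
adjacency patterns of `a` and `b` differ, the minimum is adjacent to `u`. -/
def RP (R : SimpleGraph ℕ) (a b : ℕ) : Prop :=
  ∃ u, u < min a b ∧ (∀ w, w < u → (R.Adj w a ↔ R.Adj w b)) ∧
    R.Adj u (min a b) ∧ ¬ R.Adj u (max a b)

lemma RP_symm (R : SimpleGraph ℕ) (a b : ℕ) : RP R a b = RP R b a := by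
  unfold RP
  rw [min_comm, max_comm]
  apply propext
  exact exists_congr fun u => and_congr_right fun _ => and_congr_left fun _ =>
    ⟨fun h w hw => (h w hw).symm, fun h w hw => (h w hw).symm⟩

open Finset in
/-- geometric sum bound -/
lemma two_pow_sum_lt (n : ℕ) : (∑ j ∈ Finset.range n, 2 ^ j) < 2 ^ n := by
  induction n with
  | zero => simp
  | succ n ih =>
    rw [Finset.sum_range_succ]
    have : (2 : ℕ) ^ (n + 1) = 2 ^ n + 2 ^ n := by ring
    omega

/-- There is a 2-coloring of the edges of the Rado graph such that every induced
subgraph which is again a Rado graph (i.e. satisfies the extension property) contains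
edges of both colors. -/
theorem rado_not_edge_ramsey (R : SimpleGraph ℕ) (hR : ExtensionProperty R) :
    ∃ c : Sym2 ℕ → Fin 2,
      ∀ S : Set ℕ, ExtensionPropertyOn R S →
        ∃ e₁ ∈ R.edgeSet, ∃ e₂ ∈ R.edgeSet,
          (∀ v ∈ e₁, v ∈ S) ∧ (∀ v ∈ e₂, v ∈ S) ∧ c e₁ = 0 ∧ c e₂ = 1 := by
  classical
  set c : Sym2 ℕ → Fin 2 :=
    Sym2.lift ⟨fun a b => if RP R a b then 1 else 0,
      fun a b => by show (if RP R a b then (1:Fin 2) else 0) = if RP R b a then 1 else 0; rw [RP_symm]⟩ with hcdef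
  have hc : ∀ a b : ℕ, c s(a, b) = if RP R a b then 1 else 0 := fun a b => rfl
  refine ⟨c, ?_⟩
  intro S hS
  -- arbitrarily large witnesses inside S
  have key : ∀ A B : Finset ℕ, ↑A ⊆ S → ↑B ⊆ S → Disjoint A B → ∀ n,
      ∃ v, v ∈ S ∧ n < v ∧ (∀ a ∈ A, R.Adj v a) ∧ (∀ b ∈ B, ¬ R.Adj v b) := by
    intro A B hA hB hAB n
    obtain ⟨v, hvS, hvA, hvB, hadj, hnadj⟩ :=
      hS A (B ∪ ((Finset.range (n+1)).filter (· ∈ S) \ A)) hA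
        (by
          intro m hm
          simp only [Finset.coe_union, Set.mem_union, Finset.mem_coe,
            Finset.mem_sdiff, Finset.mem_filter] at hm
          rcases hm with hm | ⟨⟨_, hm⟩, _⟩
          · exact hB hm
          · exact hm)
        (Finset.disjoint_union_right.2 ⟨hAB, Finset.disjoint_sdiff⟩)
    refine ⟨v, hvS, ?_, hadj, fun b hb => hnadj b (Finset.mem_union_left _ hb)⟩
    by_contra hle
    push_neg at hle
    exact hvB (Finset.mem_union_right _ (Finset.mem_sdiff.2
      ⟨Finset.mem_filter.2 ⟨Finset.mem_range.2 (by omega), hvS⟩, hvA⟩))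
  -- a base point x ∈ S
  obtain ⟨x, hxS, -, -, -⟩ := key ∅ ∅ (by simp) (by simp) (by simp) 0
  -- a starting vertex above x
  obtain ⟨v₀, hv₀S, hv₀, -, -⟩ := key ∅ ∅ (by simp) (by simp) (by simp) x
  -- the step: extend the chain, flipping adjacency to x
  have step : ∀ p : {v : ℕ // v ∈ S ∧ x < v},
      ∃ q : {v : ℕ // v ∈ S ∧ x < v}, p.1 < q.1 ∧ R.Adj p.1 q.1 ∧
        (R.Adj x q.1 ↔ ¬ R.Adj x p.1) := by
    rintro ⟨v, hvS, hxv⟩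
    by_cases hadj : R.Adj x v
    · obtain ⟨w, hwS, hw, hA, hB⟩ := key {v} {x}
        (by simpa using hvS) (by simpa using hxS)
        (Finset.disjoint_singleton.2 (Nat.ne_of_gt hxv)) v
      refine ⟨⟨w, hwS, lt_trans hxv hw⟩, hw, (hA v (Finset.mem_singleton_self v)).symm, ?_⟩
      exact iff_of_false (fun h => hB x (Finset.mem_singleton_self x) h.symm)
        (not_not_intro hadj)
    · obtain ⟨w, hwS, hw, hA, -⟩ := key {v, x} ∅
        (by
          intro m hm
          simp only [Finset.coe_insert, Finset.coe_singleton, Set.mem_insert_iff,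
            Set.mem_singleton_iff] at hm
          rcases hm with rfl | rfl
          · exact hvS
          · exact hxS)
        (by simp) (by simp) v
      refine ⟨⟨w, hwS, lt_trans hxv hw⟩, hw, (hA v (by simp)).symm, ?_⟩
      exact iff_of_true ((hA x (by simp)).symm) hadj
  choose F hF1 hF2 hF3 using step
  set z : ℕ → {v : ℕ // v ∈ S ∧ x < v} := fun n => F^[n] ⟨v₀, hv₀S, hv₀⟩ with hzdef
  have hzsucc : ∀ n, z (n+1) = F (z n) := fun n => Function.iterate_succ_apply' F n _
  have hzS : ∀ n, (z n).1 ∈ S := fun n => (z n).2.1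
  have hxz : ∀ n, x < (z n).1 := fun n => (z n).2.2
  have hlt : ∀ n, (z n).1 < (z (n+1)).1 := by intro n; rw [hzsucc]; exact hF1 _
  have hadjz : ∀ n, R.Adj (z n).1 (z (n+1)).1 := by intro n; rw [hzsucc]; exact hF2 _
  have hflip : ∀ n, (R.Adj x (z (n+1)).1 ↔ ¬ R.Adj x (z n).1) := by
    intro n; rw [hzsucc]; exact hF3 _
  -- the binary value of a vertex: adjacency pattern on [0, x]
  set val : ℕ → ℕ := fun p => ∑ j ∈ Finset.range (x+1), if R.Adj (x - j) p then 2^j else 0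
    with hvaldef
  have vallt : ∀ p, val p < 2^(x+1) := by
    intro p
    refine lt_of_le_of_lt (Finset.sum_le_sum fun j _ => ?_) (two_pow_sum_lt (x+1))
    split <;> simp
  have valmono : ∀ p q u, u ≤ x → (∀ w, w < u → (R.Adj w p ↔ R.Adj w q)) →
      ¬ R.Adj u p → R.Adj u q → val p < val q := by
    intro p q u hux hagree hp hq
    set j0 := x - u with hj0
    have hxj0 : x - j0 = u := by omega
    have hsplit : ∀ r : ℕ, val r =
        (∑ j ∈ Finset.range (j0+1), if R.Adj (x-j) r then 2^j else 0) +
        ∑ j ∈ Finset.Ico (j0+1) (x+1), (if R.Adj (x-j) r then 2^j else 0) := by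
      intro r
      simp only [hvaldef]
      rw [Finset.range_eq_Ico,
        ← Finset.sum_Ico_consecutive _ (by omega : 0 ≤ j0+1) (by omega : j0+1 ≤ x+1),
        ← Finset.range_eq_Ico]
    have hhigh : (∑ j ∈ Finset.Ico (j0+1) (x+1), if R.Adj (x-j) p then 2^j else 0) =
        ∑ j ∈ Finset.Ico (j0+1) (x+1), if R.Adj (x-j) q then 2^j else 0 := by
      refine Finset.sum_congr rfl fun j hj => ?_
      rw [Finset.mem_Ico] at hj
      have hlt : x - j < u := by omega
      rw [if_congr (hagree _ hlt) rfl rfl]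
    have hlowp : (∑ j ∈ Finset.range (j0+1), if R.Adj (x-j) p then 2^j else 0) < 2^j0 := by
      rw [Finset.sum_range_succ, hxj0, if_neg hp, add_zero]
      refine lt_of_le_of_lt (Finset.sum_le_sum fun j _ => ?_) (two_pow_sum_lt j0)
      split <;> simp
    have hlowq : (2:ℕ)^j0 ≤ ∑ j ∈ Finset.range (j0+1), if R.Adj (x-j) q then 2^j else 0 := by
      rw [Finset.sum_range_succ, hxj0, if_pos hq]
      exact Nat.le_add_left _ _
    rw [hsplit p, hsplit q, hhigh]
    omega
  -- color analysis of consecutive edges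
  have hPcase : ∀ n, (RP R (z n).1 (z (n+1)).1 → val (z (n+1)).1 < val (z n).1) ∧
      (¬ RP R (z n).1 (z (n+1)).1 → val (z n).1 < val (z (n+1)).1) := by
    intro n
    have hab : (z n).1 < (z (n+1)).1 := hlt n
    have hmin : min (z n).1 (z (n+1)).1 = (z n).1 := min_eq_left hab.le
    have hmax : max (z n).1 (z (n+1)).1 = (z (n+1)).1 := max_eq_right hab.le
    have hdx : ¬ (R.Adj x (z n).1 ↔ R.Adj x (z (n+1)).1) := by
      have := hflip n; tauto
    constructor
    · rintro ⟨u, hu, hagree, hadja, hnadjb⟩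
      rw [hmin] at hadja
      rw [hmax] at hnadjb
      have hux : u ≤ x := by
        by_contra h
        push_neg at h
        exact hdx (hagree x h)
      exact valmono (z (n+1)).1 (z n).1 u hux (fun w hw => (hagree w hw).symm) hnadjb hadja
    · intro hnP
      have hexists : ∃ w, ¬(R.Adj w (z n).1 ↔ R.Adj w (z (n+1)).1) := ⟨x, hdx⟩
      set u := Nat.find hexists with hu
      have hu1 : ¬(R.Adj u (z n).1 ↔ R.Adj u (z (n+1)).1) := Nat.find_spec hexists
      have hux : u ≤ x := Nat.find_min' hexists hdx
      have hagree : ∀ w, w < u → (R.Adj w (z n).1 ↔ R.Adj w (z (n+1)).1) :=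
        fun w hw => not_not.1 (Nat.find_min hexists hw)
      have hnadja : ¬ R.Adj u (z n).1 := by
        intro hadja
        have hnb : ¬ R.Adj u (z (n+1)).1 := by tauto
        exact hnP ⟨u, by rw [hmin]; exact lt_of_le_of_lt hux (hxz n), hagree,
          by rwa [hmin], by rwa [hmax]⟩
      have hadjb : R.Adj u (z (n+1)).1 := by tauto
      exact valmono (z n).1 (z (n+1)).1 u hux hagree hnadja hadjb
  have fin2aux0 : ∀ y : Fin 2, y ≠ 0 → y = 1 := by decide
  have fin2aux1 : ∀ y : Fin 2, y ≠ 1 → y = 0 := by decide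
  -- there is a consecutive edge of color 0
  have hex0 : ∃ n, c s((z n).1, (z (n+1)).1) = 0 := by
    by_contra h
    push_neg at h
    have hdec : ∀ n, val (z (n+1)).1 < val (z n).1 := by
      intro n
      have h1 : c s((z n).1, (z (n+1)).1) = 1 := fin2aux0 _ (h n)
      rw [hc] at h1
      by_cases hcase : RP R (z n).1 (z (n+1)).1
      · exact (hPcase n).1 hcase
      · rw [if_neg hcase] at h1
        exact absurd h1 (by decide)
    have hbd : ∀ n, val (z n).1 + n ≤ val (z 0).1 := by
      intro n
      induction n with
      | zero => simp
      | succ n ih => have := hdec n; omega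
    have := hbd (val (z 0).1 + 1)
    omega
  -- there is a consecutive edge of color 1
  have hex1 : ∃ n, c s((z n).1, (z (n+1)).1) = 1 := by
    by_contra h
    push_neg at h
    have hinc : ∀ n, val (z n).1 < val (z (n+1)).1 := by
      intro n
      have h0 : c s((z n).1, (z (n+1)).1) = 0 := fin2aux1 _ (h n)
      rw [hc] at h0
      by_cases hcase : RP R (z n).1 (z (n+1)).1
      · rw [if_pos hcase] at h0
        exact absurd h0 (by decide)
      · exact (hPcase n).2 hcase
    have hge : ∀ n, n ≤ val (z n).1 := by
      intro n
      induction n with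
      | zero => exact Nat.zero_le _
      | succ n ih => have := hinc n; omega
    have h1 := hge (2^(x+1))
    have h2 := vallt (z (2^(x+1))).1
    omega
  obtain ⟨n0, h0⟩ := hex0
  obtain ⟨n1, h1⟩ := hex1
  refine ⟨s((z n0).1, (z (n0+1)).1), R.mem_edgeSet.2 (hadjz n0),
    s((z n1).1, (z (n1+1)).1), R.mem_edgeSet.2 (hadjz n1), ?_, ?_, h0, h1⟩
  · intro v hv
    rw [Sym2.mem_iff] at hv
    rcases hv with rfl | rfl
    · exact hzS n0
    · exact hzS (n0+1)
  · intro v hv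
    rw [Sym2.mem_iff] at hv
    rcases hv with rfl | rfl
    · exact hzS n1
    · exact hzS (n1+1)
end

section
/- The Halpern–Läuchli theorem (strong tree version, level products, for the binary tree): for every d ≥ 1, every r ≥ 1, and every coloring c of the set ⋃_{n ∈ ℕ} (2ⁿ)ᵈ of d-tuples of binary sequences of equal length into r colors, there exist an infinite set A ⊆ ℕ and strong subtrees S₁, …, S_d of 2^{<ω}, each with level set A, such that c is constant on the set ⋃_{a ∈ A} (S₁ ∩ 2ᵃ) × ⋯ × (S_d ∩ 2ᵃ) of d-tuples whose coordinates lie in the respective subtrees at a common level a ∈ A. -/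
/-- `S ⊆ 2^{<ω}` (nodes coded as `List Bool`, ordered by end-extension, i.e. the
prefix order) is a strong subtree of the binary tree with level set `A ⊆ ℕ`:
(i) every node of `S` has length in `A`, and every length in `A` is realized in `S`;
(ii) `S` has a unique node of minimal length (the stem);
(iii) for every `s ∈ S` and every `a' ∈ A` which is the least element of `A` greater
than `|s|`, and each direction `i : Bool`, there is exactly one node of `S` of length
`a'` end-extending `s ++ [i]`;
(iv) every non-minimal node of `S` arises this way: it end-extends `s ++ [i]` for
some `s ∈ S` with no level of `A` strictly between `|s|` and its own length. -/
def IsStrongSubtree (S : Set (List Bool)) (A : Set ℕ) : Prop :=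
  (∀ s ∈ S, s.length ∈ A) ∧
  (∀ a ∈ A, ∃ s ∈ S, s.length = a) ∧
  (∃! s, s ∈ S ∧ ∀ t ∈ S, s.length ≤ t.length) ∧
  (∀ s ∈ S, ∀ a' ∈ A, s.length < a' → (∀ b ∈ A, s.length < b → a' ≤ b) →
    ∀ i : Bool, ∃! t, t ∈ S ∧ t.length = a' ∧ (s ++ [i]) <+: t) ∧
  (∀ t ∈ S, (∃ u ∈ S, u.length < t.length) →
    ∃ s ∈ S, ∃ i : Bool, (s ++ [i]) <+: t ∧ s.length < t.length ∧
      ∀ b ∈ A, s.length < b → t.length ≤ b)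

set_option linter.unusedSectionVars false

namespace HLaux
open List

variable {α : Type} [DecidableEq α] [Fintype α] [Nonempty α]

def sub (v : List (Option α)) (x : α) : List α := v.map (fun o => o.getD x)

def pureW (w : List α) : List (Option α) := w.map some

@[simp] lemma sub_nil (x : α) : sub ([] : List (Option α)) x = [] := rfl

@[simp] lemma sub_append (v v' : List (Option α)) (x : α) :
    sub (v ++ v') x = sub v x ++ sub v' x := by simp [sub]

@[simp] lemma sub_pureW (w : List α) (x : α) : sub (pureW w) x = w := by
  induction w <;> simp_all [sub, pureW]

@[simp] lemma length_sub (v : List (Option α)) (x : α) : (sub v x).length = v.length := by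
  simp [sub]

@[simp] lemma sub_cons_none (v : List (Option α)) (x : α) :
    sub (none :: v) x = x :: sub v x := by simp [sub]

lemma exists_decomp (v : List (Option α)) (h : none ∈ v) :
    ∃ (a : List α) (w : List (Option α)), v = pureW a ++ none :: w := by
  induction v with
  | nil => simp at h
  | cons o t ih =>
    rcases o with _ | x
    · exact ⟨[], t, rfl⟩
    · have h' : none ∈ t := by simpa using h
      obtain ⟨a, w, hw⟩ := ih h'
      exact ⟨x :: a, w, by simp [pureW, hw]⟩

section HJ

variable (α)

/-- index type from the Hales-Jewett theorem for colorings valued in `K` -/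
noncomputable def hjI (K : Type) [Finite K] : Type :=
  (Combinatorics.Line.exists_mono_in_high_dimension α K).choose

noncomputable instance hjIFintype (K : Type) [Finite K] : Fintype (hjI α K) :=
  (Combinatorics.Line.exists_mono_in_high_dimension α K).choose_spec.choose

lemma hjI_spec (K : Type) [Finite K] (C : (hjI α K → α) → K) :
    ∃ l : Combinatorics.Line α (hjI α K), l.IsMono C := by
  have := (Combinatorics.Line.exists_mono_in_high_dimension α K).choose_spec.choose_spec
  exact this C

/-- deterministic Hales-Jewett dimension -/
noncomputable def hjd (K : Type) [Finite K] : ℕ := Fintype.card (hjI α K)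

variable {α}

/-- Hales-Jewett for words: a variable word (split at its first variable as
`a ++ x :: sub w x`) with all substitution instances getting the same color;
the total length is deterministic. -/
lemma hj_words (K : Type) [Finite K] (κ' : List α → K) :
    ∃ (a : List α) (w : List (Option α)), a.length + 1 + w.length = hjd α K ∧
      ∀ x y : α, κ' (a ++ x :: sub w x) = κ' (a ++ y :: sub w y) := by
  classical
  set ι := hjI α K
  set n := hjd α K with hn
  let e : ι ≃ Fin n := Fintype.equivFin ι
  let C : (ι → α) → K := fun f => κ' ((List.finRange n).map (f ∘ e.symm))
  obtain ⟨l, c, hc⟩ := hjI_spec α K C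
  -- the word of the line
  set u : List (Option α) := (List.finRange n).map (fun i => l.idxFun (e.symm i)) with hu
  have hsub : ∀ x : α, sub u x = (List.finRange n).map ((l x) ∘ e.symm) := by
    intro x
    simp only [hu, sub, List.map_map]
    apply List.map_congr_left
    intro i _
    simp [Combinatorics.Line.apply_def, Function.comp]
  have hmem : none ∈ u := by
    obtain ⟨i₀, hi₀⟩ := l.proper
    have : l.idxFun (e.symm (e i₀)) = none := by simpa using hi₀
    rw [hu]
    refine List.mem_map.mpr ⟨e i₀, by simp, this⟩
  obtain ⟨a, w, hw⟩ := exists_decomp u hmem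
  have hlen : a.length + 1 + w.length = n := by
    have : u.length = n := by simp [hu]
    rw [hw] at this
    simp only [List.length_append, List.length_cons, pureW, List.length_map] at this
    omega
  refine ⟨a, w, hlen, fun x y => ?_⟩
  have hx : a ++ x :: sub w x = sub u x := by
    rw [hw]; simp only [sub_append, sub_cons_none, sub_pureW]
  have hy : a ++ y :: sub w y = sub u y := by
    rw [hw]; simp only [sub_append, sub_cons_none, sub_pureW]
  rw [hx, hy, hsub x, hsub y]
  have := (hc x).trans (hc y).symm
  simpa [C] using this

/-- palette: colorings of short words -/
def PAL (α : Type) (M r : ℕ) : Type := {z : List α // z.length ≤ M} → Fin r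

instance PAL.finite (M r : ℕ) : Finite (PAL α M r) := by
  haveI h : Finite {z : List α // z.length ≤ M} := (List.finite_length_le α M).to_subtype
  unfold PAL
  infer_instance

lemma hj_ctx (M r : ℕ) (y₀ : List α) (κ : List α → Fin r) :
    ∃ (a : List α) (w : List (Option α)), a.length + 1 + w.length = hjd α (PAL α M r) ∧
      ∀ (x y : α) (z : List α), z.length ≤ M →
        κ (y₀ ++ (a ++ x :: sub w x) ++ z) = κ (y₀ ++ (a ++ y :: sub w y) ++ z) := by
  obtain ⟨a, w, hlen, hmono⟩ :=
    hj_words (PAL α M r) (fun t => (fun z => κ (y₀ ++ t ++ z.1) : PAL α M r))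
  exact ⟨a, w, hlen, fun x y z hz => congrFun (hmono x y) ⟨z, hz⟩⟩

end HJ

section GoalFin

variable (α) in
/-- budgets -/
noncomputable def Mseq [DecidableEq α] [Fintype α] [Nonempty α] (r : ℕ) : ℕ → ℕ
  | 0 => 0
  | t + 1 => hjd α (PAL α (Mseq r t) r) + Mseq r t

noncomputable def lam : α := Classical.arbitrary α

variable (r : ℕ) (κ : List α → Fin r)

/-- chosen variable word data for context `y₀` and budget `M` -/
noncomputable def caw (M : ℕ) (y₀ : List α) : List α × List (Option α) :=
  ⟨(hj_ctx M r y₀ κ).choose, (hj_ctx M r y₀ κ).choose_spec.choose⟩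

lemma caw_len (M : ℕ) (y₀ : List α) :
    (caw r κ M y₀).1.length + 1 + (caw r κ M y₀).2.length = hjd α (PAL α M r) :=
  (hj_ctx M r y₀ κ).choose_spec.choose_spec.1

lemma caw_mono (M : ℕ) (y₀ : List α) :
    ∀ (x y : α) (z : List α), z.length ≤ M →
      κ (y₀ ++ ((caw r κ M y₀).1 ++ x :: sub (caw r κ M y₀).2 x) ++ z) =
      κ (y₀ ++ ((caw r κ M y₀).1 ++ y :: sub (caw r κ M y₀).2 y) ++ z) :=
  (hj_ctx M r y₀ κ).choose_spec.choose_spec.2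

variable (α) in
/-- budget of slot `i` -/
noncomputable def FB (i : ℕ) : ℕ := Mseq α r (r - i)

variable (α) in
/-- length of slot `i` -/
noncomputable def HB (i : ℕ) : ℕ := hjd α (PAL α (FB α r i) r)

/-- the chain -/
noncomputable def chX : ℕ → List α
  | 0 => []
  | i + 1 =>
      chX i ++ ((caw r κ (FB α r i) (chX i)).1 ++
        (lam : α) :: sub (caw r κ (FB α r i) (chX i)).2 lam)

noncomputable def cA (i : ℕ) : List α := (caw r κ (FB α r i) (chX r κ i)).1
noncomputable def cW (i : ℕ) : List (Option α) := (caw r κ (FB α r i) (chX r κ i)).2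

lemma chX_succ (i : ℕ) :
    chX r κ (i + 1) = chX r κ i ++ (cA r κ i ++ (lam : α) :: sub (cW r κ i) lam) := rfl

lemma cAW_len (i : ℕ) : (cA r κ i).length + 1 + (cW r κ i).length = HB α r i :=
  caw_len r κ _ _

lemma cAW_mono (i : ℕ) (x y : α) (z : List α) (hz : z.length ≤ FB α r i) :
    κ (chX r κ i ++ (cA r κ i ++ x :: sub (cW r κ i) x) ++ z) =
    κ (chX r κ i ++ (cA r κ i ++ y :: sub (cW r κ i) y) ++ z) :=
  caw_mono r κ _ _ x y z hz

lemma chX_len_succ (i : ℕ) :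
    (chX r κ (i + 1)).length = (chX r κ i).length + HB α r i := by
  rw [chX_succ]
  have := cAW_len r κ i
  simp only [List.length_append, List.length_cons, length_sub]
  omega

lemma chX_prefix_succ (i : ℕ) : chX r κ i <+: chX r κ (i + 1) :=
  ⟨_, (chX_succ r κ i).symm⟩

lemma chX_prefix (i j : ℕ) (h : i ≤ j) : chX r κ i <+: chX r κ j := by
  induction j with
  | zero =>
    have : i = 0 := Nat.le_zero.mp h
    subst this; exact List.prefix_refl _
  | succ j ih =>
    rcases Nat.lt_or_ge i (j + 1) with h' | h'
    · exact (ih (Nat.lt_succ_iff.mp h')).trans (chX_prefix_succ r κ j)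
    · have : i = j + 1 := le_antisymm h h'
      subst this; exact List.prefix_refl _

lemma mseq_step (t : ℕ) : Mseq α r (t + 1) = hjd α (PAL α (Mseq α r t) r) + Mseq α r t := rfl

lemma HB_le (i : ℕ) (hi : i + 1 ≤ r) : HB α r (i + 1) ≤ Mseq α r (r - i) := by
  have h1 : r - i = (r - (i + 1)) + 1 := by omega
  rw [h1, mseq_step]
  have h5 : HB α r (i + 1) = hjd α (PAL α (Mseq α r (r - (i + 1))) r) := rfl
  omega

lemma chain_bound : ∀ (d i : ℕ), i + 1 + d ≤ r →
    (chX r κ (i + 1 + d)).length + HB α r (i + 1 + d) ≤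
      (chX r κ (i + 1)).length + Mseq α r (r - i) := by
  intro d
  induction d with
  | zero =>
    intro i hi
    simpa using Nat.add_le_add_left (HB_le r i (by omega)) (chX r κ (i + 1)).length
  | succ d ih =>
    intro i hi
    have h2 := ih (i + 1) (by omega)
    have h3 : i + 1 + (d + 1) = (i + 1) + 1 + d := by omega
    rw [h3]
    refine le_trans h2 ?_
    rw [chX_len_succ]
    have h4 : r - i = (r - (i + 1)) + 1 := by omega
    rw [h4, mseq_step]
    have h5 : HB α r (i + 1) = hjd α (PAL α (Mseq α r (r - (i + 1))) r) := rfl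
    omega

/-- prefix/point color focusing: the main finite combinatorial lemma -/
lemma exists_focused : ∃ (a : List α) (w : List (Option α)),
    ∀ x : α, κ (a ++ x :: sub w x) = κ a := by
  rcases Nat.eq_zero_or_pos r with rfl | hr
  · exact (κ []).elim0
  set D : Fin (r + 1) → Fin r := fun i => κ (chX r κ i ++ cA r κ i) with hD
  obtain ⟨i0, j0, hne, heq⟩ := Fintype.exists_ne_map_eq_of_card_lt D (by simp)
  obtain ⟨i, j, hij, hji, hDij⟩ : ∃ i j : Fin (r + 1), (i : ℕ) < (j : ℕ) ∧
      (j : ℕ) ≤ r ∧ D i = D j := by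
    rcases lt_or_gt_of_ne hne with h | h
    · exact ⟨i0, j0, h, Nat.lt_succ_iff.mp j0.isLt, heq⟩
    · exact ⟨j0, i0, h, Nat.lt_succ_iff.mp i0.isLt, heq.symm⟩
  set gap : List α := (chX r κ j).drop (chX r κ ((i : ℕ) + 1)).length with hgap
  have hx : chX r κ ((i : ℕ) + 1) ++ gap = chX r κ j := by
    exact List.prefix_iff_eq_append.mp (chX_prefix r κ _ _ (by omega))
  have hbound : (gap ++ cA r κ j).length ≤ FB α r i := by
    have hcb := chain_bound r κ ((j : ℕ) - ((i : ℕ) + 1)) i (by omega)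
    have hj' : (i : ℕ) + 1 + ((j : ℕ) - ((i : ℕ) + 1)) = (j : ℕ) := by omega
    rw [hj'] at hcb
    have h1 : (cA r κ j).length ≤ HB α r j := by have := cAW_len r κ j; omega
    have h2 : (chX r κ ((i : ℕ) + 1)).length ≤ (chX r κ j).length :=
      (chX_prefix r κ _ _ (by omega)).length_le
    have h3 : gap.length = (chX r κ j).length - (chX r κ ((i : ℕ) + 1)).length := by
      simp [hgap]
    have h4 : FB α r i = Mseq α r (r - i) := rfl
    simp only [List.length_append]
    omega
  refine ⟨chX r κ i ++ cA r κ i, cW r κ i ++ pureW (gap ++ cA r κ j), fun x => ?_⟩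
  have hpt : (chX r κ i ++ cA r κ i) ++ x :: sub (cW r κ i ++ pureW (gap ++ cA r κ j)) x
      = chX r κ i ++ (cA r κ i ++ x :: sub (cW r κ i) x) ++ (gap ++ cA r κ j) := by
    simp [sub_append, List.append_assoc]
  rw [hpt]
  rw [cAW_mono r κ i x lam (gap ++ cA r κ j) hbound]
  have hlam : chX r κ i ++ (cA r κ i ++ (lam : α) :: sub (cW r κ i) lam) ++ (gap ++ cA r κ j)
      = chX r κ j ++ cA r κ j := by
    rw [← hx, ← chX_succ]
    simp [List.append_assoc]
  rw [hlam]
  exact hDij.symm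

end GoalFin

section Ultra

/-- a set of words is Good if it contains the prefix and all substitution points
of some left-decomposed variable word -/
def Good (A : Set (List α)) : Prop :=
  ∃ (a : List α) (w : List (Option α)), a ∈ A ∧ ∀ x : α, a ++ x :: sub w x ∈ A

lemma good_of_union (s : Finset (Set (List α))) (hs : ∀ v : List α, ∃ A ∈ s, v ∈ A) :
    ∃ A ∈ s, Good A := by
  classical
  have hne : ∀ v : List α, ∃ A, A ∈ s ∧ v ∈ A := fun v => by
    obtain ⟨A, hA, hvA⟩ := hs v; exact ⟨A, hA, hvA⟩
  set n := s.card with hn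
  have : Fintype {A // A ∈ s} := FinsetCoe.fintype s
  have hcard : Fintype.card {A // A ∈ s} = n := Fintype.card_coe s
  let e : {A // A ∈ s} ≃ Fin n := (Fintype.equivFin _).trans (finCongr hcard)
  let pick : List α → {A // A ∈ s} := fun v => ⟨(hne v).choose, (hne v).choose_spec.1⟩
  have hpick : ∀ v, v ∈ (pick v).1 := fun v => (hne v).choose_spec.2
  let κ : List α → Fin n := fun v => e (pick v)
  obtain ⟨a, w, hfoc⟩ := exists_focused n κ
  refine ⟨(pick a).1, (pick a).2, a, w, hpick a, fun x => ?_⟩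
  have : pick (a ++ x :: sub w x) = pick a := e.injective (hfoc x)
  have h2 := hpick (a ++ x :: sub w x)
  rwa [this] at h2

instance listMul : Mul (List α) := ⟨(· ++ ·)⟩

lemma listMul_def (x y : List α) : x * y = x ++ y := rfl

instance listSemigroup : Semigroup (List α) :=
  { mul_assoc := fun a b c => (List.append_assoc a b c) }

attribute [local instance] Ultrafilter.mul Ultrafilter.semigroup

variable (α) in
/-- the compact subsemigroup of line-rich ultrafilters -/
def KK : Set (Ultrafilter (List α)) := {ν | ∀ A ∈ ν, Good A}

lemma KK_nonempty : (KK α).Nonempty := by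
  classical
  set 𝒜 : Set (Set (List α)) := {B | ¬ Good Bᶜ} with h𝒜
  have hNB : (Filter.generate 𝒜).NeBot := by
    rw [Filter.generate_neBot_iff]
    intro t ht htfin
    by_contra hemp
    rw [Set.not_nonempty_iff_eq_empty] at hemp
    -- the complements cover everything
    have hcov : ∀ v : List α, ∃ A ∈ htfin.toFinset.image compl, v ∈ A := by
      intro v
      have hv : v ∉ ⋂₀ t := by rw [hemp]; exact Set.notMem_empty v
      rw [Set.mem_sInter] at hv
      push_neg at hv
      obtain ⟨B, hBt, hvB⟩ := hv
      exact ⟨Bᶜ, Finset.mem_image_of_mem compl (htfin.mem_toFinset.mpr hBt), hvB⟩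
    obtain ⟨A, hAmem, hAgood⟩ := good_of_union _ hcov
    obtain ⟨B, hBt, rfl⟩ := Finset.mem_image.mp hAmem
    have hB𝒜 : B ∈ 𝒜 := ht (htfin.mem_toFinset.mp hBt)
    exact hB𝒜 hAgood
  obtain ⟨ν, hν⟩ := Ultrafilter.exists_le (Filter.generate 𝒜)
  refine ⟨ν, fun A hA => ?_⟩
  by_contra hAbad
  have : Aᶜ ∈ 𝒜 := by simpa [h𝒜] using hAbad
  have h1 : Aᶜ ∈ ν := hν (Filter.mem_generate_of_mem this)
  exact (Ultrafilter.compl_notMem_iff.mpr hA) h1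

lemma KK_closed : IsClosed (KK α) := by
  have : KK α = ⋂ (A : {A : Set (List α) // ¬ Good A}), {ν : Ultrafilter (List α) | A.1 ∈ ν}ᶜ := by
    ext ν
    simp only [KK, Set.mem_setOf_eq, Set.mem_iInter, Set.mem_compl_iff, Subtype.forall]
    constructor
    · intro h A hA hAν; exact hA (h A hAν)
    · intro h A hAν; by_contra hbad; exact h A hbad hAν
  rw [this]
  exact isClosed_iInter fun A => (ultrafilter_isOpen_basic A.1).isClosed_compl

lemma KK_mul {U V : Ultrafilter (List α)} (hU : U ∈ KK α) (hV : V ∈ KK α) : U * V ∈ KK α := by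
  intro A hA
  have hS : {x : List α | ∀ᶠ y in ↑V, x * y ∈ A} ∈ U := by
    have := (Ultrafilter.eventually_mul U V (· ∈ A)).mp hA
    exact this
  obtain ⟨a₀, w₀, ha₀, -⟩ := hU _ hS
  have hT : {y : List α | a₀ * y ∈ A} ∈ V := ha₀
  obtain ⟨b, w, hb, hpt⟩ := hV _ hT
  refine ⟨a₀ ++ b, w, hb, fun x => ?_⟩
  have := hpt x
  simp only [Set.mem_setOf_eq, listMul_def] at this ⊢
  rw [List.append_assoc]
  exact this

lemma exists_idem : ∃ ν : Ultrafilter (List α), ν ∈ KK α ∧ ν * ν = ν := by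
  obtain ⟨ν, hν, hidem⟩ := exists_idempotent_in_compact_subsemigroup
    (Ultrafilter.continuous_mul_left) (KK α) KK_nonempty
    (KK_closed.isCompact) (fun x hx y hy => KK_mul hx hy)
  exact ⟨ν, hν, hidem⟩

end Ultra

section Limits

variable {r : ℕ}

/-- ultrafilter limit of a finitely-valued function -/
noncomputable def nulim (ν : Ultrafilter (List α)) (f : List α → Fin r) : Fin r :=
  (Ultrafilter.eq_pure_of_finite (ν.map f)).choose

lemma nulim_mem (ν : Ultrafilter (List α)) (f : List α → Fin r) :
    {x | f x = nulim ν f} ∈ ν := by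
  have h := (Ultrafilter.eq_pure_of_finite (ν.map f)).choose_spec
  have : {nulim ν f} ∈ ν.map f := by
    rw [h]; exact Ultrafilter.mem_pure.mpr rfl
  simpa [Ultrafilter.mem_map, Set.preimage] using this

lemma nulim_unique (ν : Ultrafilter (List α)) (f : List α → Fin r) (k : Fin r)
    (h : {x | f x = k} ∈ ν) : k = nulim ν f := by
  have h2 := nulim_mem ν f
  obtain ⟨x, hx1, hx2⟩ := Ultrafilter.nonempty_of_mem (Filter.inter_mem h h2)
  exact hx1.symm.trans hx2

end Limits

section Step

attribute [local instance] Ultrafilter.mul Ultrafilter.semigroup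

variable {r : ℕ} (γ : List α → Fin r)

/-- agreement set of a front -/
def agr {I : Type} (Y : I → List α) : Set (List α) :=
  {z | ∀ i j : I, γ (Y i ++ z) = γ (Y j ++ z)}

variable (ν : Ultrafilter (List α))

lemma step_lemma (hν : ν ∈ KK α) (hid : ν * ν = ν) {I : Type} (Y : I → List α) (i₀ : I)
    (hA : agr γ Y ∈ ν) :
    ∃ (a : List α) (w : List (Option α)),
      (∀ i : I, γ (Y i ++ a) = nulim ν (fun z => γ (Y i₀ ++ z))) ∧
      (agr γ (fun p : I × α => Y p.1 ++ (a ++ p.2 :: sub w p.2)) ∈ ν) ∧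
      (∀ (i : I) (x : α), nulim ν (fun z => γ ((Y i ++ (a ++ x :: sub w x)) ++ z)) =
        nulim ν (fun z => γ (Y i₀ ++ z))) := by
  classical
  set g : List α → Fin r := fun z => γ (Y i₀ ++ z) with hg
  set κ : Fin r := nulim ν g with hκ
  have hF : {z | g z = κ} ∈ ν := nulim_mem ν g
  -- two-step sets via idempotence
  have hA' : {z : List α | {y : List α | z ++ y ∈ agr γ Y} ∈ ν} ∈ ν := by
    have h0 : agr γ Y ∈ ν * ν := by rw [hid]; exact hA
    have := (Ultrafilter.eventually_mul ν ν (· ∈ agr γ Y)).mp h0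
    exact this
  have hΘ : {z : List α | {y : List α | g (z ++ y) = κ} ∈ ν} ∈ ν := by
    have h0 : {z | g z = κ} ∈ ν * ν := by rw [hid]; exact hF
    have := (Ultrafilter.eventually_mul ν ν (fun t => g t = κ)).mp h0
    exact this
  set E : Set (List α) := agr γ Y ∩ {z | g z = κ} ∩
      ({z | {y | z ++ y ∈ agr γ Y} ∈ ν} ∩ {z | {y | g (z ++ y) = κ} ∈ ν}) with hE
  have hEν : E ∈ ν := Filter.inter_mem (Filter.inter_mem hA hF) (Filter.inter_mem hA' hΘ)
  obtain ⟨a, w, haE, hptE⟩ := hν E hEν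
  refine ⟨a, w, ?_, ?_, ?_⟩
  · intro i
    have h1 : a ∈ agr γ Y := haE.1.1
    have h2 : g a = κ := haE.1.2
    exact (h1 i i₀).trans h2
  · -- new agreement set
    have hG : (⋂ x : α, ({z | (a ++ x :: sub w x) ++ z ∈ agr γ Y} ∩
        {z | g ((a ++ x :: sub w x) ++ z) = κ})) ∈ ν := by
      have : (⋂ x : α, ({z | (a ++ x :: sub w x) ++ z ∈ agr γ Y} ∩
          {z | g ((a ++ x :: sub w x) ++ z) = κ})) ∈ (ν : Filter (List α)) :=
        Filter.iInter_mem.mpr fun x => Filter.inter_mem (hptE x).2.1 (hptE x).2.2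
      exact this
    refine Filter.mem_of_superset hG ?_
    intro z hz
    intro p q
    have hz1 := Set.mem_iInter.mp hz
    have e1 : ∀ (i : I) (x : α),
        γ ((Y i ++ (a ++ x :: sub w x)) ++ z) = κ := by
      intro i x
      have hx := hz1 x
      have hmemA : (a ++ x :: sub w x) ++ z ∈ agr γ Y := hx.1
      have hval : g ((a ++ x :: sub w x) ++ z) = κ := hx.2
      calc γ ((Y i ++ (a ++ x :: sub w x)) ++ z)
          = γ (Y i ++ ((a ++ x :: sub w x) ++ z)) := by rw [List.append_assoc]
        _ = γ (Y i₀ ++ ((a ++ x :: sub w x) ++ z)) := hmemA i i₀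
        _ = κ := hval
    exact (e1 p.1 p.2).trans (e1 q.1 q.2).symm
  · intro i x
    have hx := hptE x
    have h1 : {z | ((a ++ x :: sub w x) ++ z) ∈ agr γ Y} ∈ ν := hx.2.1
    have h2 : {z | g ((a ++ x :: sub w x) ++ z) = κ} ∈ ν := hx.2.2
    have h3 : {z | γ ((Y i ++ (a ++ x :: sub w x)) ++ z) = κ} ∈ ν := by
      refine Filter.mem_of_superset (Filter.inter_mem h1 h2) ?_
      intro z hz
      calc γ ((Y i ++ (a ++ x :: sub w x)) ++ z)
          = γ (Y i ++ ((a ++ x :: sub w x) ++ z)) := by rw [List.append_assoc]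
        _ = γ (Y i₀ ++ ((a ++ x :: sub w x) ++ z)) := hz.1 i i₀
        _ = κ := hz.2
    exact (nulim_unique ν _ κ h3).symm

end Step

section CS

variable {r : ℕ} (γ : List α → Fin r)

/-- realized front of the construction -/
def frontF (a : ℕ → List α) (w : ℕ → List (Option α)) : ℕ → (ℕ → α) → List α
  | 0, _ => []
  | q + 1, σ => frontF a w q σ ++ (a q ++ σ q :: sub (w q) (σ q))

/-- realization of a block system -/
def realW (w₀ : List α) (B : ℕ → List (Option α)) (σ : ℕ → α) : ℕ → List α
  | 0 => w₀
  | q + 1 => realW w₀ B σ q ++ sub (B q) (σ q)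

/-- The Carlson–Simpson-type theorem: a stem and left variable blocks all of whose
realizations get the same color. -/
theorem cs_main : ∃ (w₀ : List α) (B : ℕ → List (Option α)) (k : Fin r),
    (∀ q, ∃ w', B q = none :: w') ∧
    (∀ (q : ℕ) (σ : ℕ → α), γ (realW w₀ B σ q) = k) := by
  classical
  obtain ⟨ν, hν, hid⟩ := exists_idem (α := α)
  set sil : ℕ → α := fun _ => (lam : α) with hsil
  set κ₀ : Fin r := nulim ν (fun z => γ ([] ++ z)) with hκ₀
  let St := Σ' (p : ℕ × ((ℕ → α) → List α)),
      (agr γ p.2 ∈ ν) ∧ (nulim ν (fun z => γ (p.2 sil ++ z)) = κ₀)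
  let pick : St → List α × List (Option α) := fun s =>
    ⟨(step_lemma γ ν hν hid s.1.2 sil s.2.1).choose,
     (step_lemma γ ν hν hid s.1.2 sil s.2.1).choose_spec.choose⟩
  have pick_spec : ∀ s : St,
      (∀ σ0 : ℕ → α, γ (s.1.2 σ0 ++ (pick s).1) = nulim ν (fun z => γ (s.1.2 sil ++ z))) ∧
      (agr γ (fun p : (ℕ → α) × α =>
        s.1.2 p.1 ++ ((pick s).1 ++ p.2 :: sub (pick s).2 p.2)) ∈ ν) ∧
      (∀ (i : ℕ → α) (x : α),
        nulim ν (fun z => γ ((s.1.2 i ++ ((pick s).1 ++ x :: sub (pick s).2 x)) ++ z)) =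
        nulim ν (fun z => γ (s.1.2 sil ++ z))) := fun s =>
    (step_lemma γ ν hν hid s.1.2 sil s.2.1).choose_spec.choose_spec
  have hstep : ∀ s : St,
      (agr γ (fun σ : ℕ → α =>
        s.1.2 σ ++ ((pick s).1 ++ σ s.1.1 :: sub (pick s).2 (σ s.1.1))) ∈ ν) ∧
      (nulim ν (fun z => γ ((fun σ : ℕ → α =>
        s.1.2 σ ++ ((pick s).1 ++ σ s.1.1 :: sub (pick s).2 (σ s.1.1))) sil ++ z)) = κ₀) := by
    intro s
    constructor
    · refine Filter.mem_of_superset (pick_spec s).2.1 ?_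
      intro z hz σ τ
      exact hz (σ, σ s.1.1) (τ, τ s.1.1)
    · have h3 := (pick_spec s).2.2 sil (sil s.1.1)
      have h4 := s.2.2
      exact h3.trans h4
  let stepSt : St → St := fun s =>
    ⟨(s.1.1 + 1, fun σ => s.1.2 σ ++ ((pick s).1 ++ σ s.1.1 :: sub (pick s).2 (σ s.1.1))),
     (hstep s).1, (hstep s).2⟩
  have inv₀ : agr γ (fun _ : ℕ → α => ([] : List α)) ∈ ν :=
    Filter.univ_mem' (fun z i j => rfl)
  have base₀ : nulim ν (fun z => γ ((fun _ : ℕ → α => ([] : List α)) sil ++ z)) = κ₀ := rfl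
  let s₀ : St := ⟨(0, fun _ => []), inv₀, base₀⟩
  let states : ℕ → St := fun n => stepSt^[n] s₀
  have states_succ : ∀ n, states (n + 1) = stepSt (states n) := fun n =>
    Function.iterate_succ_apply' stepSt n s₀
  let aSeq : ℕ → List α := fun q => (pick (states q)).1
  let wSeq : ℕ → List (Option α) := fun q => (pick (states q)).2
  have hq : ∀ q, (states q).1.1 = q := by
    intro q; induction q with
    | zero => rfl
    | succ q ih =>
      rw [states_succ]
      show (states q).1.1 + 1 = q + 1
      omega
  have hF : ∀ q σ, (states q).1.2 σ = frontF aSeq wSeq q σ := by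
    intro q; induction q with
    | zero => intro σ; rfl
    | succ q ih =>
      intro σ
      rw [states_succ]
      show (states q).1.2 σ ++ (aSeq q ++ σ ((states q).1.1) ::
        sub (wSeq q) (σ ((states q).1.1))) = _
      rw [hq q, ih σ]
      rfl
  have hmono : ∀ (q : ℕ) (σ : ℕ → α), γ (frontF aSeq wSeq q σ ++ aSeq q) = κ₀ := by
    intro q σ
    rw [← hF q σ]
    have h1 := (pick_spec (states q)).1 σ
    rw [h1]
    exact (states q).2.2
  refine ⟨aSeq 0, fun q => none :: (wSeq q ++ pureW (aSeq (q + 1))), κ₀,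
    fun q => ⟨_, rfl⟩, ?_⟩
  have hreal : ∀ (q : ℕ) (σ : ℕ → α),
      realW (aSeq 0) (fun q => none :: (wSeq q ++ pureW (aSeq (q + 1)))) σ q
      = frontF aSeq wSeq q σ ++ aSeq q := by
    intro q σ
    induction q with
    | zero => simp [realW, frontF]
    | succ q ih =>
      show realW _ _ σ q ++ sub (none :: (wSeq q ++ pureW (aSeq (q + 1)))) (σ q) = _
      rw [ih]
      show _ ++ (σ q :: sub (wSeq q ++ pureW (aSeq (q + 1))) (σ q)) = _
      rw [sub_append, sub_pureW]
      show _ = frontF aSeq wSeq q σ ++ (aSeq q ++ σ q :: sub (wSeq q) (σ q)) ++ aSeq (q + 1)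
      simp [List.append_assoc]
  intro q σ
  rw [hreal q σ]
  exact hmono q σ

end CS
end HLaux

namespace HLaux
open List

section Tree

variable (w₀ : List Bool) (B : ℕ → List (Option Bool))

lemma realW_succ (σ : ℕ → Bool) (q : ℕ) :
    realW w₀ B σ (q + 1) = realW w₀ B σ q ++ sub (B q) (σ q) := rfl

/-- the set of nodes of the tree determined by the block system -/
def treeSet : Set (List Bool) :=
  {x | ∃ (q : ℕ) (b : ℕ → Bool), x = realW w₀ B b q}

/-- level function -/
def lev (q : ℕ) : ℕ := (realW w₀ B (fun _ => false) q).length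

lemma length_realW (b : ℕ → Bool) (q : ℕ) :
    (realW w₀ B b q).length = lev w₀ B q := by
  induction q with
  | zero => rfl
  | succ q ih =>
    simp only [realW_succ, List.length_append, length_sub, ih]
    simp [lev, realW_succ]

lemma lev_strictMono (hB : ∀ q, ∃ w', B q = none :: w') :
    StrictMono (lev w₀ B) := by
  apply strictMono_nat_of_lt_succ
  intro q
  have : lev w₀ B (q + 1) = lev w₀ B q + (B q).length := by
    simp [lev, realW_succ]
  rw [this]
  obtain ⟨w', hw'⟩ := hB q
  simp [hw']

lemma realW_congr (b b' : ℕ → Bool) (q : ℕ) (h : ∀ i < q, b i = b' i) :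
    realW w₀ B b q = realW w₀ B b' q := by
  induction q with
  | zero => rfl
  | succ q ih =>
    simp only [realW_succ]
    rw [ih (fun i hi => h i (Nat.lt_succ_of_lt hi)), h q (Nat.lt_succ_self q)]

lemma realW_prefix (b : ℕ → Bool) {q m : ℕ} (h : q ≤ m) :
    realW w₀ B b q <+: realW w₀ B b m := by
  induction m with
  | zero =>
    have : q = 0 := Nat.le_zero.mp h
    subst this; exact List.prefix_refl _
  | succ m ih =>
    rcases Nat.lt_or_ge q (m + 1) with h' | h'
    · exact (ih (Nat.lt_succ_iff.mp h')).trans ⟨_, (realW_succ w₀ B b m).symm⟩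
    · have : q = m + 1 := le_antisymm h h'
      subst this; exact List.prefix_refl _

lemma realW_child (hB : ∀ q, ∃ w', B q = none :: w') (b : ℕ → Bool) (q : ℕ) :
    realW w₀ B b q ++ [b q] <+: realW w₀ B b (q + 1) := by
  rw [realW_succ]
  obtain ⟨w', hw'⟩ := hB q
  rw [hw', sub_cons_none]
  exact ⟨sub w' (b q), by simp⟩

lemma realW_inj (hB : ∀ q, ∃ w', B q = none :: w') (b b' : ℕ → Bool) (q : ℕ)
    (h : realW w₀ B b q = realW w₀ B b' q) : ∀ i < q, b i = b' i := by
  induction q with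
  | zero => intro i hi; omega
  | succ q ih =>
    have hlen : (realW w₀ B b q).length = (realW w₀ B b' q).length := by
      rw [length_realW, length_realW]
    have h' : realW w₀ B b q ++ sub (B q) (b q) = realW w₀ B b' q ++ sub (B q) (b' q) := h
    have h2 := List.append_inj h' hlen
    intro i hi
    rcases Nat.lt_or_ge i q with hlt | hge
    · exact ih h2.1 i hlt
    · have hiq : i = q := by omega
      subst hiq
      obtain ⟨w', hw'⟩ := hB i
      have h3 := h2.2
      rw [hw', sub_cons_none, sub_cons_none] at h3
      injection h3 with h4

lemma prefix_eq_of_length {γ : Type} {l p₁ p₂ : List γ} (h1 : p₁ <+: l) (h2 : p₂ <+: l)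
    (h : p₁.length = p₂.length) : p₁ = p₂ := by
  rcases List.prefix_or_prefix_of_prefix h1 h2 with h' | h'
  · exact h'.eq_of_length h
  · exact (h'.eq_of_length h.symm).symm

lemma prefix_cancel {γ : Type} {l l₁ l₂ : List γ} (h : l ++ l₁ <+: l ++ l₂) : l₁ <+: l₂ := by
  obtain ⟨t, ht⟩ := h
  rw [List.append_assoc] at ht
  exact ⟨t, List.append_cancel_left ht⟩

theorem tree_strong (hB : ∀ q, ∃ w', B q = none :: w') :
    IsStrongSubtree (treeSet w₀ B) (Set.range (lev w₀ B)) := by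
  have hmono := lev_strictMono w₀ B hB
  have hw0 : w₀.length = lev w₀ B 0 := rfl
  refine ⟨?_, ?_, ?_, ?_, ?_⟩
  · rintro s ⟨q, b, rfl⟩
    exact ⟨q, (length_realW w₀ B b q).symm⟩
  · rintro a ⟨q, rfl⟩
    exact ⟨realW w₀ B (fun _ => false) q, ⟨q, _, rfl⟩, length_realW _ _ _ _⟩
  · refine ⟨w₀, ⟨⟨0, fun _ => false, rfl⟩, ?_⟩, ?_⟩
    · rintro t ⟨q, b, rfl⟩
      rw [length_realW, hw0]
      exact hmono.monotone (Nat.zero_le q)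
    · rintro y ⟨⟨q, b, rfl⟩, hymin⟩
      have h1 := hymin w₀ ⟨0, fun _ => false, rfl⟩
      rw [length_realW, hw0] at h1
      have hq : q = 0 := by
        by_contra hq
        exact absurd h1 (not_le.mpr (hmono (Nat.pos_of_ne_zero hq)))
      subst hq; rfl
  · rintro s ⟨q, b, rfl⟩ a' ⟨m, rfl⟩ hlt hleast i
    rw [length_realW] at hlt hleast
    have hm : m = q + 1 := by
      have h1 : q < m := (hmono.lt_iff_lt).mp hlt
      have h2 := hleast (lev w₀ B (q + 1)) ⟨q + 1, rfl⟩ (hmono (Nat.lt_succ_self q))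
      have h3 : m ≤ q + 1 := by
        by_contra h
        exact absurd h2 (not_le.mpr (hmono (by omega)))
      omega
    subst hm
    set b' : ℕ → Bool := fun t => if t = q then i else b t with hb'
    have hsb : realW w₀ B b q = realW w₀ B b' q :=
      realW_congr _ _ _ _ _ (fun t ht => by simp [hb', Nat.ne_of_lt ht])
    refine ⟨realW w₀ B b' (q + 1), ⟨⟨q + 1, b', rfl⟩, length_realW _ _ _ _, ?_⟩, ?_⟩
    · have hch := realW_child w₀ B hB b' q
      rw [← hsb] at hch
      have hbq : b' q = i := by simp [hb']
      rwa [hbq] at hch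
    · rintro t ⟨⟨m', b'', rfl⟩, hlen, hpre⟩
      rw [length_realW] at hlen
      have hm' : m' = q + 1 := hmono.injective hlen
      subst hm'
      -- the q-prefix agrees
      have hpre1 : realW w₀ B b q <+: realW w₀ B b'' (q + 1) :=
        List.IsPrefix.trans ⟨[i], rfl⟩ hpre
      have hpre2 : realW w₀ B b'' q <+: realW w₀ B b'' (q + 1) :=
        realW_prefix w₀ B b'' (Nat.le_succ q)
      have heq : realW w₀ B b'' q = realW w₀ B b q :=
        prefix_eq_of_length hpre2 hpre1 (by rw [length_realW, length_realW])
      -- the branch letter agrees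
      obtain ⟨w', hw'⟩ := hB q
      have hstep : realW w₀ B b'' (q + 1)
          = realW w₀ B b q ++ (b'' q :: sub w' (b'' q)) := by
        rw [realW_succ, heq, hw', sub_cons_none]
      have hpre3 : realW w₀ B b q ++ [i] <+:
          realW w₀ B b q ++ (b'' q :: sub w' (b'' q)) := by
        rw [← hstep]; exact hpre
      have hhead : b'' q = i := by
        have := prefix_cancel hpre3
        obtain ⟨tt, htt⟩ := this
        simpa using (congrArg List.head? htt).symm
      -- conclude equality
      apply realW_congr
      intro tt htt
      rcases Nat.lt_or_ge tt q with h' | h'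
      · have h5 := realW_inj w₀ B hB b'' b q heq tt h'
        rw [h5]
        simp [hb', Nat.ne_of_lt h']
      · have : tt = q := by omega
        subst this
        rw [hhead]; simp [hb']
  · rintro t ⟨m, bb, rfl⟩ ⟨u, ⟨mu, bu, rfl⟩, hu⟩
    rw [length_realW, length_realW] at hu
    have hm : m ≠ 0 := by
      rintro rfl
      exact absurd hu (not_lt.mpr (hmono.monotone (Nat.zero_le mu)))
    obtain ⟨m', rfl⟩ : ∃ m', m = m' + 1 := ⟨m - 1, by omega⟩
    refine ⟨realW w₀ B bb m', ⟨m', bb, rfl⟩, bb m', realW_child w₀ B hB bb m', ?_, ?_⟩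
    · rw [length_realW, length_realW]
      exact hmono (Nat.lt_succ_self m')
    · rintro c ⟨n, rfl⟩ hc
      rw [length_realW] at hc
      rw [length_realW]
      exact hmono.monotone ((hmono.lt_iff_lt).mp hc)

end Tree
end HLaux


/-- The Halpern–Läuchli theorem (strong tree version, level products, binary trees):
for every `d ≥ 1`, `r ≥ 1` and every `r`-coloring of `d`-tuples of binary sequences
(in particular of those of equal length), there are an infinite `A ⊆ ℕ` and strong
subtrees `S 0, …, S (d-1)` of `2^{<ω}`, each with level set `A`, such that the
coloring is constant on tuples whose coordinates lie in the respective subtrees at a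
common level `a ∈ A`. -/
theorem halpern_lauchli (d r : ℕ) (hd : 1 ≤ d) (hr : 1 ≤ r)
    (c : (Fin d → List Bool) → Fin r) :
    ∃ A : Set ℕ, A.Infinite ∧
      ∃ S : Fin d → Set (List Bool),
        (∀ j : Fin d, IsStrongSubtree (S j) A) ∧
        ∃ k : Fin r, ∀ x : Fin d → List Bool,
          (∀ j : Fin d, x j ∈ S j) →
          (∃ a ∈ A, ∀ j : Fin d, (x j).length = a) →
          c x = k := by
  classical
  let γ : List (Fin d → Bool) → Fin r := fun W => c (fun j => W.map (fun σ => σ j))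
  obtain ⟨w₀, B, k, hB, hmono⟩ := HLaux.cs_main (α := Fin d → Bool) γ
  let pw : Fin d → List Bool := fun j => w₀.map (fun σ => σ j)
  let pB : Fin d → ℕ → List (Option Bool) := fun j q => (B q).map (Option.map (fun σ => σ j))
  have hpB : ∀ j q, ∃ w', pB j q = none :: w' := by
    intro j q
    obtain ⟨w', hw'⟩ := hB q
    exact ⟨w'.map (Option.map (fun σ => σ j)), by simp [pB, hw']⟩
  have hcomm : ∀ (σ : ℕ → (Fin d → Bool)) (q : ℕ) (j : Fin d),
      (HLaux.realW w₀ B σ q).map (fun τ => τ j)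
        = HLaux.realW (pw j) (pB j) (fun i => σ i j) q := by
    intro σ q j
    induction q with
    | zero => rfl
    | succ q ih =>
      show ((HLaux.realW w₀ B σ q) ++ HLaux.sub (B q) (σ q)).map (fun τ => τ j) = _
      rw [List.map_append, ih]
      show _ = HLaux.realW (pw j) (pB j) (fun i => σ i j) q ++
        HLaux.sub (pB j q) (σ q j)
      congr 1
      simp only [HLaux.sub, pB, List.map_map]
      apply List.map_congr_left
      intro o _
      cases o <;> rfl
  let σ0 : ℕ → (Fin d → Bool) := fun _ _ => false
  let aL : ℕ → ℕ := fun q => (HLaux.realW w₀ B σ0 q).length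
  have hlev : ∀ j, HLaux.lev (pw j) (pB j) = aL := by
    intro j
    funext q
    have h1 := hcomm σ0 q j
    show (HLaux.realW (pw j) (pB j) (fun _ => false) q).length = _
    have h2 : (fun i => σ0 i j) = (fun _ => false) := rfl
    rw [h2] at h1
    rw [← h1, List.length_map]
  have j₀ : Fin d := ⟨0, hd⟩
  have haL : StrictMono aL := by
    have := HLaux.lev_strictMono (pw j₀) (pB j₀) (hpB j₀)
    rwa [hlev j₀] at this
  refine ⟨Set.range aL, Set.infinite_range_of_injective haL.injective,
    fun j => HLaux.treeSet (pw j) (pB j), fun j => ?_, k, ?_⟩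
  · have := HLaux.tree_strong (pw j) (pB j) (hpB j)
    rwa [hlev j] at this
  · intro x hx hlen
    obtain ⟨a, ⟨n, rfl⟩, hxa⟩ := hlen
    choose m b hxb using hx
    have hmj : ∀ j, m j = n := by
      intro j
      apply haL.injective
      have h1 : (x j).length = aL (m j) := by
        rw [hxb j, HLaux.length_realW, hlev j]
      rw [← h1, hxa j]
    let σ : ℕ → (Fin d → Bool) := fun i j => b j i
    have hxeq : x = fun j => (HLaux.realW w₀ B σ n).map (fun τ => τ j) := by
      funext j
      rw [hcomm σ n j, hxb j]
      rw [hmj j]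
    have := hmono n σ
    calc c x = γ (HLaux.realW w₀ B σ n) := by rw [hxeq]
      _ = k := this
end
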